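/- In the construction with parameter 0 < α < 1: let S be the family built from a tree T by choosing for each I ∈ S a family F(I) of pairwise almost disjoint tree elements inside I with total measure (1-α)μ(I), set A_I = I \ ∪F(I), and define ψ = Σ_{I∈S} λ γ^{r(I)} χ_{A_I} with λ > 0 and 0 < γ < 1/(1-α), where r(I) is the rank. Then for every I ∈ S, μ(I)^{-1} ∫_I ψ dμ = λα γ^{r(I)}/(1 - γ(1-α)). -/

import Mathlib

open MeasureTheory ENNReal
open scoped ENNReal

/-- In the construction with parameter `0 < α < 1`: `S` is a family of
sets built from a tree, where each `I ∈ S` carries a family `F I ⊆ S` of pairwise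
a.e. disjoint members of `I` of total measure `(1-α)μ(I)`; `A_I = I \ ⋃ F(I)` has
`μ(A_I) = αμ(I)`; ranks satisfy `r(univ)=0`, `r(J)=r(I)+1` for `J ∈ F I`, and
`Σ_{S∋J⊆I, r(J)=r(I)+m} μ(J) = (1-α)^m μ(I)`. For
`ψ = Σ_{I∈S} λ γ^(r I) χ_{A_I}` with `λ > 0`, `0 < γ < 1/(1-α)`, every `I ∈ S`
satisfies `μ(I)⁻¹ ∫_I ψ dμ = λ α γ^(r I) / (1 - γ(1-α))`. -/
theorem construction_average {X : Type*} [MeasurableSpace X] (μ : Measure X)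
    [IsProbabilityMeasure μ]
    (hna : ∀ s : Set X, MeasurableSet s → μ s ≠ 0 →
      ∃ t ⊆ s, MeasurableSet t ∧ 0 < μ t ∧ μ t < μ s)
    (α lam γ : ℝ) (hα0 : 0 < α) (hα1 : α < 1) (hlam : 0 < lam)
    (hγ0 : 0 < γ) (hγ1 : γ < 1 / (1 - α))
    (S : Set (Set X)) (F : Set X → Set (Set X)) (r : Set X → ℕ)
    (hSc : S.Countable)
    (hmeas : ∀ I ∈ S, MeasurableSet I)
    (hpos : ∀ I ∈ S, 0 < μ I)
    (hXS : Set.univ ∈ S)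
    (hFS : ∀ I ∈ S, F I ⊆ S)
    (hFsub : ∀ I ∈ S, ∀ J ∈ F I, J ⊆ I)
    (hFdisj : ∀ I ∈ S, ∀ J ∈ F I, ∀ K ∈ F I, J ≠ K → μ (J ∩ K) = 0)
    (hFmeasure : ∀ I ∈ S, μ (⋃₀ F I) = ENNReal.ofReal (1 - α) * μ I)
    (hnested : ∀ I ∈ S, ∀ J ∈ S, I ⊆ J ∨ J ⊆ I ∨ μ (I ∩ J) = 0)
    (hA : ∀ I ∈ S, μ (I \ ⋃₀ F I) = ENNReal.ofReal α * μ I)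
    (hr0 : r Set.univ = 0)
    (hr : ∀ I ∈ S, ∀ J ∈ F I, r J = r I + 1)
    (hdecomp : ∀ I ∈ S, μ (I \ ⋃₀ {A : Set X | ∃ J ∈ S, J ⊆ I ∧ A = J \ ⋃₀ F J}) = 0)
    (hsum : ∀ I ∈ S, ∀ m : ℕ,
      ∑' J : {J : Set X // J ∈ S ∧ J ⊆ I ∧ r J = r I + m}, μ (J : Set X) =
        ENNReal.ofReal ((1 - α) ^ m) * μ I) :
    ∀ I ∈ S,
      ((μ I).toReal)⁻¹ *
        (∫ x in I, (∑' J : S, lam * γ ^ r (J : Set X) *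
          Set.indicator ((J : Set X) \ ⋃₀ F (J : Set X)) (fun _ => (1 : ℝ)) x) ∂μ) =
      lam * α * γ ^ r I / (1 - γ * (1 - α)) := by
  intro I hI
  classical
  haveI : Countable ↥S := hSc.to_subtype
  have h1α : (0:ℝ) < 1 - α := by linarith
  have hβ : γ * (1 - α) < 1 := (lt_div_iff₀ h1α).mp hγ1
  have hβ' : (0:ℝ) < 1 - γ * (1 - α) := by linarith
  have hμT : ∀ s : Set X, μ s ≠ ⊤ := fun s => measure_ne_top μ s
  -- measurability of the pieces
  have hAmeas : ∀ J ∈ S, MeasurableSet (J \ ⋃₀ F J) := by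
    intro J hJ
    exact (hmeas J hJ).diff (MeasurableSet.sUnion (hSc.mono (hFS J hJ))
      (fun t ht => hmeas t (hFS J hJ ht)))
  -- Step 1: same rank inside implies equality
  have key_eq : ∀ I' ∈ S, ∀ J ∈ S, J ⊆ I' → r J = r I' → J = I' := by
    intro I' hI' J hJ hJI hrJ
    by_contra hne
    have h0 := hsum I' hI' 0
    simp only [pow_zero, ENNReal.ofReal_one, one_mul] at h0
    set T := {J : Set X // J ∈ S ∧ J ⊆ I' ∧ r J = r I' + 0} with hT
    let e1 : T := ⟨I', hI', subset_rfl, rfl⟩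
    let e2 : T := ⟨J, hJ, hJI, by omega⟩
    have hne' : e1 ≠ e2 := fun h => hne (congrArg Subtype.val h).symm
    have hle : μ I' + μ J ≤ ∑' K : T, μ (K : Set X) := by
      have h2 := ENNReal.sum_le_tsum (f := fun K : T => μ (K : Set X)) {e1, e2}
      rwa [Finset.sum_pair hne'] at h2
    rw [h0] at hle
    have hle0 : μ J ≤ 0 := ENNReal.le_of_add_le_add_left (hμT I') (by simpa using hle)
    exact absurd (le_antisymm hle0 bot_le) (hpos J hJ).ne'
  -- Step 2: subsets have larger rank
  have rank_ge : ∀ I' ∈ S, ∀ J ∈ S, J ⊆ I' → r I' ≤ r J := by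
    intro I' hI' J hJ hJI
    by_contra hlt
    push_neg at hlt
    have hm := hsum J hJ (r I' - r J)
    have hpos' : 0 < ENNReal.ofReal ((1 - α) ^ (r I' - r J)) * μ J := by
      apply ENNReal.mul_pos
      · simp only [ne_eq, ENNReal.ofReal_eq_zero, not_le]
        positivity
      · exact (hpos J hJ).ne'
    rw [← hm] at hpos'
    have hne : Nonempty {K : Set X // K ∈ S ∧ K ⊆ J ∧ r K = r J + (r I' - r J)} := by
      by_contra hje
      rw [not_nonempty_iff] at hje
      rw [tsum_empty] at hpos'
      exact lt_irrefl _ hpos'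
    obtain ⟨K, hK, hKJ, hrK⟩ := hne.some
    have hKI : K = I' := key_eq I' hI' K hK (hKJ.trans hJI) (by omega)
    have hJeq : J = I' := Set.Subset.antisymm hJI (by rw [← hKI]; exact hKJ)
    rw [hJeq] at hlt
    omega
  -- Step 3: the general weighted-sum lemma
  have LemW : ∀ I' ∈ S, ∀ w : ℕ → ℝ≥0∞,
      (∑' J : Set X, if J ∈ S ∧ J ⊆ I' then w (r J - r I') * μ J else 0)
        = (∑' m : ℕ, w m * ENNReal.ofReal ((1 - α) ^ m)) * μ I' := by
    intro I' hI' w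
    have step1 : ∀ J : Set X, (if J ∈ S ∧ J ⊆ I' then w (r J - r I') * μ J else 0)
        = ∑' m : ℕ, (if J ∈ S ∧ J ⊆ I' ∧ r J = r I' + m then w m * μ J else 0) := by
      intro J
      by_cases h : J ∈ S ∧ J ⊆ I'
      · obtain ⟨hJ, hJI⟩ := h
        have hge := rank_ge I' hI' J hJ hJI
        rw [if_pos ⟨hJ, hJI⟩, tsum_eq_single (r J - r I')]
        · rw [if_pos ⟨hJ, hJI, by omega⟩]
        · intro m hm
          rw [if_neg]
          rintro ⟨-, -, hm'⟩
          omega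
      · rw [if_neg h]
        symm
        refine tsum_eq_single 0 (fun m _ => ?_) |>.trans ?_ <;>
          · rw [if_neg]; rintro ⟨h1, h2, -⟩; exact h ⟨h1, h2⟩
    calc (∑' J : Set X, if J ∈ S ∧ J ⊆ I' then w (r J - r I') * μ J else 0)
        = ∑' (J : Set X) (m : ℕ), (if J ∈ S ∧ J ⊆ I' ∧ r J = r I' + m then w m * μ J else 0) :=
          tsum_congr step1
      _ = ∑' (m : ℕ) (J : Set X), (if J ∈ S ∧ J ⊆ I' ∧ r J = r I' + m then w m * μ J else 0) :=
          ENNReal.tsum_comm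
      _ = ∑' m : ℕ, w m * ENNReal.ofReal ((1 - α) ^ m) * μ I' := by
          refine tsum_congr (fun m => ?_)
          have h1 : ∀ J : Set X, (if J ∈ S ∧ J ⊆ I' ∧ r J = r I' + m then w m * μ J else 0)
              = w m * (if J ∈ S ∧ J ⊆ I' ∧ r J = r I' + m then μ J else 0) := by
            intro J; split <;> simp
          rw [tsum_congr h1, ENNReal.tsum_mul_left]
          have h2 : (∑' J : Set X, (if J ∈ S ∧ J ⊆ I' ∧ r J = r I' + m then μ J else 0))
              = ENNReal.ofReal ((1 - α) ^ m) * μ I' := by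
            have h3 := tsum_subtype {J : Set X | J ∈ S ∧ J ⊆ I' ∧ r J = r I' + m}
              (fun J => μ J)
            have h4 : ∀ J : Set X,
                Set.indicator {J : Set X | J ∈ S ∧ J ⊆ I' ∧ r J = r I' + m} (fun J => μ J) J
                  = (if J ∈ S ∧ J ⊆ I' ∧ r J = r I' + m then μ J else 0) := by
              intro J
              by_cases h : J ∈ S ∧ J ⊆ I' ∧ r J = r I' + m
              · rw [Set.indicator_of_mem
                  (show J ∈ {J : Set X | J ∈ S ∧ J ⊆ I' ∧ r J = r I' + m} from h), if_pos h]
              · rw [Set.indicator_of_notMem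
                  (show J ∉ {J : Set X | J ∈ S ∧ J ⊆ I' ∧ r J = r I' + m} from h), if_neg h]
            rw [← tsum_congr h4, ← h3]
            exact hsum I' hI' m
          rw [h2, mul_assoc]
      _ = (∑' m : ℕ, w m * ENNReal.ofReal ((1 - α) ^ m)) * μ I' := ENNReal.tsum_mul_right
  -- basic ofReal fact
  have hofα : (1 : ℝ≥0∞) - ENNReal.ofReal (1 - α) = ENNReal.ofReal α := by
    rw [← ENNReal.ofReal_one, ← ENNReal.ofReal_sub _ (by linarith)]
    norm_num
  -- Step 4: total measure of the pieces inside I'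
  have SumA : ∀ I' ∈ S,
      (∑' J : ↥{J : Set X | J ∈ S ∧ J ⊆ I'}, μ ((J : Set X) \ ⋃₀ F J)) = μ I' := by
    intro I' hI'
    have h1 : (∑' J : ↥{J : Set X | J ∈ S ∧ J ⊆ I'}, μ ((J : Set X) \ ⋃₀ F J))
        = ∑' J : Set X,
          (if J ∈ S ∧ J ⊆ I' then (fun _ : ℕ => ENNReal.ofReal α) (r J - r I') * μ J else 0) := by
      rw [tsum_subtype {J : Set X | J ∈ S ∧ J ⊆ I'} (fun J => μ (J \ ⋃₀ F J))]
      refine tsum_congr (fun J => ?_)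
      by_cases h : J ∈ S ∧ J ⊆ I'
      · simp only [Set.indicator_apply, Set.mem_setOf_eq, if_pos h, hA J h.1]
      · simp only [Set.indicator_apply, Set.mem_setOf_eq, if_neg h]
    rw [h1, LemW I' hI' (fun _ : ℕ => ENNReal.ofReal α)]
    have h2 : (∑' m : ℕ, ENNReal.ofReal α * ENNReal.ofReal ((1 - α) ^ m)) = 1 := by
      have he : ∀ m : ℕ, ENNReal.ofReal α * ENNReal.ofReal ((1 - α) ^ m)
          = ENNReal.ofReal α * ENNReal.ofReal (1 - α) ^ m := by
        intro m; rw [ENNReal.ofReal_pow (by linarith)]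
      rw [tsum_congr he, ENNReal.tsum_mul_left, ENNReal.tsum_geometric, hofα]
      exact ENNReal.mul_inv_cancel (by simpa using hα0) ENNReal.ofReal_ne_top
    rw [h2, one_mul]
  -- sUnion / iUnion identification for hdecomp
  have hUnion : ∀ I' : Set X, ⋃₀ {A : Set X | ∃ J ∈ S, J ⊆ I' ∧ A = J \ ⋃₀ F J}
      = ⋃ L : ↥{L : Set X | L ∈ S ∧ L ⊆ I'}, ((L : Set X) \ ⋃₀ F L) := by
    intro I'
    ext x
    simp only [Set.mem_sUnion, Set.mem_setOf_eq, Set.mem_iUnion]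
    constructor
    · rintro ⟨A, ⟨J, hJ, hJI, rfl⟩, hx⟩
      exact ⟨⟨J, hJ, hJI⟩, hx⟩
    · rintro ⟨⟨J, hJ, hJI⟩, hx⟩
      exact ⟨J \ ⋃₀ F J, ⟨J, hJ, hJI, rfl⟩, hx⟩
  -- Step 5: a.e. disjointness of the pieces
  have hdisj : ∀ I' ∈ S, ∀ J ∈ S, ∀ K ∈ S, J ⊆ I' → K ⊆ I' → J ≠ K →
      μ ((J \ ⋃₀ F J) ∩ (K \ ⋃₀ F K)) = 0 := by
    intro I' hI' J hJ K hK hJI hKI hJK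
    haveI hct : Countable ↥{L : Set X | L ∈ S ∧ L ⊆ I'} :=
      (hSc.mono (fun L hL => hL.1)).to_subtype
    set T := ↥{L : Set X | L ∈ S ∧ L ⊆ I'} with hT
    set A : T → Set X := fun L => (L : Set X) \ ⋃₀ F L with hAdef
    set U : Set X := ⋃ L : T, A L with hUd
    set j : T := ⟨J, hJ, hJI⟩ with hj
    set k : T := ⟨K, hK, hKI⟩ with hk
    have hjk : j ≠ k := fun h => hJK (by simpa [hj, hk] using congrArg Subtype.val h)
    have hcover : μ (I' \ U) = 0 := by
      have := hdecomp I' hI'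
      rwa [hUnion I'] at this
    have hSumA : ∑' L : T, μ (A L) = μ I' := SumA I' hI'
    set R : ℝ≥0∞ := ∑' L : T, @ite _ (L = j) (Classical.propDecidable _) 0 (μ (A L)) with hR
    have hsplitJ : μ (A j \ A k) + μ (A j ∩ A k) = μ (A j) :=
      measure_diff_add_inter (A j) (hAmeas K hK)
    have htotal : μ (A j) + R = μ I' := by
      rw [hR, ← hSumA]
      exact (ENNReal.tsum_eq_add_tsum_ite (f := fun L : T => μ (A L)) j).symm
    have hUle : μ I' ≤ μ (A j \ A k) + R := by
      have hsub : U ⊆ ⋃ L : T, (if L = j then A j \ A k else A L) := by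
        intro x hx
        rw [hUd, Set.mem_iUnion] at hx
        obtain ⟨L, hxL⟩ := hx
        rw [Set.mem_iUnion]
        by_cases hLj : L = j
        · subst hLj
          by_cases hxk : x ∈ A k
          · exact ⟨k, by rw [if_neg hjk.symm]; exact hxk⟩
          · exact ⟨j, by rw [if_pos rfl]; exact ⟨hxL, hxk⟩⟩
        · exact ⟨L, by rw [if_neg hLj]; exact hxL⟩
      calc μ I' ≤ μ (I' \ U) + μ U :=
            le_trans (measure_mono (Set.subset_diff_union I' U)) (measure_union_le _ _)
        _ = μ U := by rw [hcover, zero_add]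
        _ ≤ μ (⋃ L : T, (if L = j then A j \ A k else A L)) := measure_mono hsub
        _ ≤ ∑' L : T, μ (if L = j then A j \ A k else A L) := measure_iUnion_le _
        _ = μ (A j \ A k) + R := by
              rw [ENNReal.tsum_eq_add_tsum_ite j, hR]
              congr 1
              · simp
              · refine tsum_congr (fun L => ?_)
                by_cases hLj : L = j <;> simp [hLj]
    have hRfin : R ≠ ⊤ := by
      have : R ≤ ∑' L : T, μ (A L) := by
        refine ENNReal.tsum_le_tsum (fun L => ?_)
        split
        · exact zero_le
        · exact le_rfl
      rw [hSumA] at this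
      exact ne_top_of_le_ne_top (hμT I') this
    have hfin : μ (A j \ A k) + R ≠ ⊤ := ENNReal.add_ne_top.mpr ⟨hμT _, hRfin⟩
    have harr : (μ (A j \ A k) + R) + μ (A j ∩ A k) = μ I' := by
      rw [← htotal, ← hsplitJ]; ring
    have : μ (A j ∩ A k) ≤ 0 := by
      refine ENNReal.le_of_add_le_add_left hfin ?_
      rw [add_zero, harr]
      exact hUle
    exact le_antisymm this bot_le
  -- Step 6: pieces from strictly larger sets meet I in measure zero
  have hnotsub : ∀ J ∈ S, I ⊆ J → I ≠ J → μ ((J \ ⋃₀ F J) ∩ I) = 0 := by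
    intro J hJ hIJ hne
    haveI hct : Countable ↥{L : Set X | L ∈ S ∧ L ⊆ I} :=
      (hSc.mono (fun L hL => hL.1)).to_subtype
    set T := ↥{L : Set X | L ∈ S ∧ L ⊆ I} with hT
    set A : T → Set X := fun L => (L : Set X) \ ⋃₀ F L with hAdef
    set U : Set X := ⋃ L : T, A L with hUd
    have h0 : μ (I \ U) = 0 := by
      have := hdecomp I hI
      rwa [hUnion I] at this
    have h1 : μ ((J \ ⋃₀ F J) ∩ U) = 0 := by
      have hsub : (J \ ⋃₀ F J) ∩ U ⊆ ⋃ L : T, ((J \ ⋃₀ F J) ∩ A L) := by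
        rintro x ⟨hx1, hx2⟩
        rw [hUd, Set.mem_iUnion] at hx2
        obtain ⟨L, hxL⟩ := hx2
        rw [Set.mem_iUnion]
        exact ⟨L, hx1, hxL⟩
      refine le_antisymm ?_ bot_le
      calc μ ((J \ ⋃₀ F J) ∩ U) ≤ ∑' L : T, μ ((J \ ⋃₀ F J) ∩ A L) :=
            le_trans (measure_mono hsub) (measure_iUnion_le _)
        _ = 0 := by
            rw [ENNReal.tsum_eq_zero]
            rintro ⟨L, hL, hLI⟩
            refine hdisj J hJ J hJ L hL subset_rfl (hLI.trans hIJ) (fun h => ?_)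
            exact hne (Set.Subset.antisymm hIJ (h ▸ hLI))
    have hsub2 : (J \ ⋃₀ F J) ∩ I ⊆ (I \ U) ∪ ((J \ ⋃₀ F J) ∩ U) := by
      rintro x ⟨hx1, hx2⟩
      by_cases hxU : x ∈ U
      · exact Or.inr ⟨hx1, hxU⟩
      · exact Or.inl ⟨hx2, hxU⟩
    refine le_antisymm ?_ bot_le
    calc μ ((J \ ⋃₀ F J) ∩ I) ≤ μ (I \ U) + μ ((J \ ⋃₀ F J) ∩ U) :=
          le_trans (measure_mono hsub2) (measure_union_le _ _)
      _ = 0 := by rw [h0, h1, add_zero]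
  -- measure of each piece inside I
  have hμAI : ∀ J ∈ S, μ ((J \ ⋃₀ F J) ∩ I)
      = if J ⊆ I then ENNReal.ofReal α * μ J else 0 := by
    intro J hJ
    by_cases h : J ⊆ I
    · rw [if_pos h, Set.inter_eq_self_of_subset_left (Set.diff_subset.trans h), hA J hJ]
    · rw [if_neg h]
      rcases hnested J hJ I hI with hJI | hIJ | hnull
      · exact absurd hJI h
      · exact hnotsub J hJ hIJ (fun he => h (he ▸ subset_rfl))
      · refine le_antisymm (le_trans (measure_mono ?_) hnull.le) bot_le
        exact Set.inter_subset_inter_left _ Set.diff_subset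
  -- the key ENNReal computation
  have KEY : (∑' J : ↥S, ENNReal.ofReal (lam * γ ^ r (J : Set X))
        * μ (((J : Set X) \ ⋃₀ F (J : Set X)) ∩ I))
      = ENNReal.ofReal (lam * α * γ ^ r I / (1 - γ * (1 - α))) * μ I := by
    set w : ℕ → ℝ≥0∞ :=
      fun m => ENNReal.ofReal (lam * γ ^ r I * α) * ENNReal.ofReal γ ^ m with hw
    have h1 : ∀ J : Set X,
        S.indicator (fun J => ENNReal.ofReal (lam * γ ^ r J) * μ ((J \ ⋃₀ F J) ∩ I)) J
          = (if J ∈ S ∧ J ⊆ I then w (r J - r I) * μ J else 0) := by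
      intro J
      rw [Set.indicator_apply]
      by_cases hJ : J ∈ S
      · rw [if_pos hJ, hμAI J hJ]
        by_cases h : J ⊆ I
        · rw [if_pos h, if_pos ⟨hJ, h⟩]
          have hge : r I ≤ r J := rank_ge I hI J hJ h
          have hc : ENNReal.ofReal (lam * γ ^ r J) * ENNReal.ofReal α
              = ENNReal.ofReal (lam * γ ^ r I * α) * ENNReal.ofReal γ ^ (r J - r I) := by
            rw [← ENNReal.ofReal_pow hγ0.le, ← ENNReal.ofReal_mul (by positivity),
              ← ENNReal.ofReal_mul (by positivity)]
            congr 1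
            have : γ ^ r J = γ ^ r I * γ ^ (r J - r I) := by
              rw [← pow_add]
              congr 1
              omega
            rw [this]
            ring
          rw [← mul_assoc, hc, hw]
        · rw [if_neg h, if_neg (fun hc => h hc.2), mul_zero]
      · rw [if_neg hJ, if_neg (fun hc => hJ hc.1)]
    have hgeo : (∑' m : ℕ, w m * ENNReal.ofReal ((1 - α) ^ m))
        = ENNReal.ofReal (lam * α * γ ^ r I / (1 - γ * (1 - α))) := by
      have he : ∀ m : ℕ, w m * ENNReal.ofReal ((1 - α) ^ m)
          = ENNReal.ofReal (lam * γ ^ r I * α) * ENNReal.ofReal (γ * (1 - α)) ^ m := by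
        intro m
        rw [hw, ENNReal.ofReal_pow (by linarith), ENNReal.ofReal_mul hγ0.le, mul_pow, mul_assoc]
      rw [tsum_congr he, ENNReal.tsum_mul_left, ENNReal.tsum_geometric]
      have h2 : (1 : ℝ≥0∞) - ENNReal.ofReal (γ * (1 - α)) = ENNReal.ofReal (1 - γ * (1 - α)) := by
        rw [← ENNReal.ofReal_one, ← ENNReal.ofReal_sub _ (by positivity)]
      rw [h2, ← ENNReal.ofReal_inv_of_pos hβ', ← ENNReal.ofReal_mul (by positivity)]
      congr 1
      field_simp
    calc (∑' J : ↥S, ENNReal.ofReal (lam * γ ^ r (J : Set X))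
          * μ (((J : Set X) \ ⋃₀ F (J : Set X)) ∩ I))
        = ∑' J : Set X,
            S.indicator (fun J => ENNReal.ofReal (lam * γ ^ r J) * μ ((J \ ⋃₀ F J) ∩ I)) J :=
          tsum_subtype S (fun J => ENNReal.ofReal (lam * γ ^ r J) * μ ((J \ ⋃₀ F J) ∩ I))
      _ = ∑' J : Set X, (if J ∈ S ∧ J ⊆ I then w (r J - r I) * μ J else 0) := tsum_congr h1
      _ = (∑' m : ℕ, w m * ENNReal.ofReal ((1 - α) ^ m)) * μ I := LemW I hI w
      _ = ENNReal.ofReal (lam * α * γ ^ r I / (1 - γ * (1 - α))) * μ I := by rw [hgeo]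
  -- now the integral
  set f : ↥S → X → ℝ := fun J x => lam * γ ^ r (J : Set X)
    * Set.indicator ((J : Set X) \ ⋃₀ F (J : Set X)) (fun _ => (1 : ℝ)) x with hf
  have hf_eq : ∀ J : ↥S, f J
      = Set.indicator ((J : Set X) \ ⋃₀ F (J : Set X)) (fun _ => lam * γ ^ r (J : Set X)) := by
    intro J
    funext x
    rw [hf]
    simp only [Set.indicator_apply]
    split <;> simp
  have hmeas_f : ∀ J : ↥S, AEStronglyMeasurable (f J) (μ.restrict I) := by
    intro J
    rw [hf_eq]
    exact (measurable_const.indicator (hAmeas _ J.2)).aestronglyMeasurable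
  have hlint : ∀ J : ↥S, (∫⁻ a, ‖f J a‖₊ ∂(μ.restrict I))
      = ENNReal.ofReal (lam * γ ^ r (J : Set X)) * μ (((J : Set X) \ ⋃₀ F (J : Set X)) ∩ I) := by
    intro J
    have hptw : ∀ a, (‖f J a‖₊ : ℝ≥0∞)
        = Set.indicator ((J : Set X) \ ⋃₀ F (J : Set X))
            (fun _ => ENNReal.ofReal (lam * γ ^ r (J : Set X))) a := by
      intro a
      rw [hf_eq]
      simp only [Set.indicator_apply]
      split
      · exact Real.enorm_eq_ofReal (by positivity)
      · simp
    calc (∫⁻ a, ‖f J a‖₊ ∂(μ.restrict I))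
        = ∫⁻ a, Set.indicator ((J : Set X) \ ⋃₀ F (J : Set X))
            (fun _ => ENNReal.ofReal (lam * γ ^ r (J : Set X))) a ∂(μ.restrict I) := by
          exact lintegral_congr hptw
      _ = ENNReal.ofReal (lam * γ ^ r (J : Set X))
            * (μ.restrict I) ((J : Set X) \ ⋃₀ F (J : Set X)) :=
          lintegral_indicator_const (hAmeas _ J.2) _
      _ = ENNReal.ofReal (lam * γ ^ r (J : Set X))
            * μ (((J : Set X) \ ⋃₀ F (J : Set X)) ∩ I) := by
          rw [Measure.restrict_apply (hAmeas _ J.2)]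
  have hlint_sum : (∑' J : ↥S, ∫⁻ a, ‖f J a‖₊ ∂(μ.restrict I)) ≠ ⊤ := by
    rw [tsum_congr hlint, KEY]
    exact ENNReal.mul_ne_top ENNReal.ofReal_ne_top (hμT I)
  have hint : (∫ x in I, (∑' J : ↥S, f J x) ∂μ) = ∑' J : ↥S, ∫ x in I, f J x ∂μ :=
    integral_tsum hmeas_f hlint_sum
  have hintJ : ∀ J : ↥S, (∫ x in I, f J x ∂μ)
      = (ENNReal.ofReal (lam * γ ^ r (J : Set X))
          * μ (((J : Set X) \ ⋃₀ F (J : Set X)) ∩ I)).toReal := by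
    intro J
    rw [hf_eq, integral_indicator_const _ (hAmeas _ J.2), measureReal_def, Measure.restrict_apply (hAmeas _ J.2),
      smul_eq_mul, ENNReal.toReal_mul, ENNReal.toReal_ofReal (by positivity)]
    ring
  have hfinJ : ∀ J : ↥S, (ENNReal.ofReal (lam * γ ^ r (J : Set X))
      * μ (((J : Set X) \ ⋃₀ F (J : Set X)) ∩ I)) ≠ ⊤ :=
    fun J => ENNReal.mul_ne_top ENNReal.ofReal_ne_top (hμT _)
  have hval : (∫ x in I, (∑' J : ↥S, f J x) ∂μ)
      = (lam * α * γ ^ r I / (1 - γ * (1 - α))) * (μ I).toReal := by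
    rw [hint, tsum_congr hintJ, ← ENNReal.tsum_toReal_eq hfinJ, KEY, ENNReal.toReal_mul,
      ENNReal.toReal_ofReal (by positivity)]
  have htμ : (μ I).toReal ≠ 0 := by
    have := hpos I hI
    simp [ENNReal.toReal_eq_zero_iff, this.ne', hμT I]
  rw [show (∫ x in I, (∑' J : S, lam * γ ^ r (J : Set X) *
      Set.indicator ((J : Set X) \ ⋃₀ F (J : Set X)) (fun _ => (1 : ℝ)) x) ∂μ)
      = (∫ x in I, (∑' J : ↥S, f J x) ∂μ) from rfl, hval]
  field_simp
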